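/- For p ≤ -1 and every r ≥ 1, the number b⁻_{K_p,r} = -(1/r²) Σ_{d|r} μ(r/d) C(3d-1, d-1) is an integer, and b⁺_{K_p,r} = (1/r²) Σ_{d|r} μ(r/d) C((2|p|+1)d - 1, d-1) is an integer. -/

import Mathlib

open Finset ArithmeticFunction

section

variable {ι R : Type*} [CommRing R] [DecidableEq ι]

lemma prod_expand (c : R) (hc : c * c = 0) (s : Finset ι) (g : ι → R) :
    ∏ i ∈ s, (c - g i) = ∏ i ∈ s, (-g i) + c * ∑ i ∈ s, ∏ j ∈ s.erase i, (-g j) := by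
  induction s using Finset.induction with
  | empty => simp
  | insert a s ha ih =>
    rw [Finset.prod_insert ha, ih, Finset.prod_insert ha, Finset.sum_insert ha,
      Finset.erase_insert ha]
    have h1 : ∀ i ∈ s, ∏ j ∈ (insert a s).erase i, (-g j) = (-g a) * ∏ j ∈ s.erase i, (-g j) := by
      intro i hi
      have hia : i ≠ a := by rintro rfl; exact ha hi
      rw [Finset.erase_insert_of_ne hia.symm, Finset.prod_insert
        (fun h => ha (Finset.mem_of_mem_erase h))]
    rw [Finset.sum_congr rfl h1, ← Finset.mul_sum]
    set P := ∏ i ∈ s, (-g i)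
    set T := ∑ i ∈ s, ∏ j ∈ s.erase i, (-g j)
    have : (c - g a) * (P + c * T) = -g a * P + c * (P + -g a * T) + (c * c) * T := by ring
    rw [this, hc]; ring
end

lemma filter_dvd_image (p n : ℕ) (hp : 0 < p) :
    (Finset.Ico 1 (n*p)).filter (fun i => p ∣ i) = (Finset.Ico 1 n).image (fun j => p * j) := by
  ext i
  simp only [mem_filter, mem_Ico, mem_image]
  constructor
  · rintro ⟨⟨h1, h2⟩, ⟨j, rfl⟩⟩
    refine ⟨j, ⟨?_, ?_⟩, rfl⟩
    · rcases Nat.eq_zero_or_pos j with rfl | h; · simp at h1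
      exact h
    · rw [mul_comm n p] at h2; exact Nat.lt_of_mul_lt_mul_left h2
  · rintro ⟨j, ⟨hj1, hj2⟩, rfl⟩
    refine ⟨⟨Nat.one_le_iff_ne_zero.2 (by positivity), ?_⟩, Dvd.intro j rfl⟩
    rw [mul_comm n p]
    exact Nat.mul_lt_mul_left hp |>.mpr hj2

lemma prod_split (p n : ℕ) (hp : 0 < p) (f : ℕ → ℕ) :
    ∏ i ∈ Finset.Ico 1 (n*p), f i =
      (∏ i ∈ (Finset.Ico 1 (n*p)).filter (fun i => ¬ p ∣ i), f i) *
        ∏ j ∈ Finset.Ico 1 n, f (p * j) := by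
  rw [← Finset.prod_filter_mul_prod_filter_not (Finset.Ico 1 (n*p)) (fun i => ¬ p ∣ i)]
  congr 1
  rw [(by simp : (Finset.Ico 1 (n*p)).filter (fun i => ¬¬ p ∣ i)
      = (Finset.Ico 1 (n*p)).filter (fun i => p ∣ i)), filter_dvd_image p n hp,
    Finset.prod_image]
  intro a _ b _ h
  exact Nat.eq_of_mul_eq_mul_left hp h

lemma dF_eq (m t : ℕ) : (m - 1).descFactorial (t-1) = ∏ i ∈ Finset.Ico 1 t, (m - i) := by
  rw [Nat.descFactorial_eq_prod_range, Finset.prod_Ico_eq_prod_range]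
  exact Finset.prod_congr rfl (fun i _ => by omega)

lemma choose_dF (m t : ℕ) : (m - 1).choose (t-1) * Nat.factorial (t-1)
    = (m - 1).descFactorial (t-1) := by
  rw [Nat.descFactorial_eq_factorial_mul_choose, mul_comm]

lemma prod_id (k p n : ℕ) (hp : 0 < p) (hn : 0 < n) :
    (k*(n*p) - 1).choose (n*p - 1) * ∏ i ∈ (Finset.Ico 1 (n*p)).filter (fun i => ¬ p ∣ i), i
    = (k*n - 1).choose (n - 1) *
        ∏ i ∈ (Finset.Ico 1 (n*p)).filter (fun i => ¬ p ∣ i), (k*(n*p) - i) := by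
  have hM : 0 < p^(n-1) * Nat.factorial (n-1) := by positivity
  apply Nat.eq_of_mul_eq_mul_right hM
  have hnp : 0 < n*p := by positivity
  have hfact : ∏ i ∈ Finset.Ico 1 (n*p), i = Nat.factorial (n*p - 1) := by
    conv_lhs => rw [(by omega : n*p = (n*p - 1) + 1)]
    rw [Finset.prod_Ico_id_eq_factorial]
  have hconst : ∏ j ∈ Finset.Ico 1 n, p * j = p^(n-1) * Nat.factorial (n-1) := by
    rw [Finset.prod_mul_distrib, Finset.prod_const, Nat.card_Ico]
    congr 1
    conv_lhs => rw [(by omega : n = (n - 1) + 1)]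
    rw [Finset.prod_Ico_id_eq_factorial]
  have hconst2 : ∏ j ∈ Finset.Ico 1 n, (k*(n*p) - p * j)
      = p^(n-1) * (k*n - 1).descFactorial (n-1) := by
    have h1 : ∀ j ∈ Finset.Ico 1 n, k*(n*p) - p*j = p * (k*n - j) := by
      intro j hj
      rw [Nat.mul_sub, (by ring : k*(n*p) = p * (k*n))]
    rw [Finset.prod_congr rfl h1, Finset.prod_mul_distrib, Finset.prod_const, Nat.card_Ico,
      dF_eq (k*n) n]
  have E1 : (∏ i ∈ (Finset.Ico 1 (n*p)).filter (fun i => ¬ p ∣ i), i) *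
      (p^(n-1) * Nat.factorial (n-1)) = Nat.factorial (n*p - 1) := by
    rw [← hconst, ← prod_split p n hp (fun i => i), hfact]
  have E2 : (∏ i ∈ (Finset.Ico 1 (n*p)).filter (fun i => ¬ p ∣ i), (k*(n*p) - i)) *
      (p^(n-1) * (k*n - 1).descFactorial (n-1)) = (k*(n*p) - 1).descFactorial (n*p - 1) := by
    rw [← hconst2, ← prod_split p n hp (fun i => k*(n*p) - i), dF_eq (k*(n*p)) (n*p)]
  calc (k*(n*p) - 1).choose (n*p - 1) *
        (∏ i ∈ (Finset.Ico 1 (n*p)).filter (fun i => ¬ p ∣ i), i) *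
        (p^(n-1) * Nat.factorial (n-1))
      = (k*(n*p) - 1).choose (n*p - 1) * Nat.factorial (n*p - 1) := by rw [mul_assoc, E1]
    _ = (k*(n*p) - 1).descFactorial (n*p - 1) := choose_dF (k*(n*p)) (n*p)
    _ = (∏ i ∈ (Finset.Ico 1 (n*p)).filter (fun i => ¬ p ∣ i), (k*(n*p) - i)) *
        (p^(n-1) * (k*n - 1).descFactorial (n-1)) := E2.symm
    _ = (∏ i ∈ (Finset.Ico 1 (n*p)).filter (fun i => ¬ p ∣ i), (k*(n*p) - i)) *
        (p^(n-1) * ((k*n - 1).choose (n-1) * Nat.factorial (n-1))) := by rw [choose_dF (k*n) n]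
    _ = (k*n - 1).choose (n - 1) *
        (∏ i ∈ (Finset.Ico 1 (n*p)).filter (fun i => ¬ p ∣ i), (k*(n*p) - i)) *
        (p^(n-1) * Nat.factorial (n-1)) := by ring

lemma key (k p j m : ℕ) (hp : p.Prime) (hk : Odd k) (hk1 : 0 < k) (hj : 1 ≤ j)
    (hm : 0 < m) (hpm : ¬ p ∣ m) :
    ((p:ℤ)^(2*j)) ∣ ((k * (m * p^j) - 1).choose (m * p^j - 1) : ℤ)
      - ((k * (m * p^(j-1)) - 1).choose (m * p^(j-1) - 1) : ℤ) := by
  have hppos : 0 < p := hp.pos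
  set n := m * p^(j-1) with hn
  have hnpos : 0 < n := by positivity
  have hNn : m * p^j = n * p := by
    rw [hn, mul_assoc]
    congr 1
    conv_lhs => rw [(by omega : j = (j-1)+1)]
    rw [pow_succ]
  set A := (k * (n*p) - 1).choose (n*p - 1) with hA
  set B := (k * n - 1).choose (n - 1) with hB
  rw [hNn]
  suffices h : (A : ZMod (p^(2*j))) = (B : ZMod (p^(2*j))) by
    have h2 : A ≡ B [MOD p^(2*j)] := (ZMod.natCast_eq_natCast_iff _ _ _).mp h
    have h3 : ((p^(2*j) : ℕ) : ℤ) ∣ (B : ℤ) - (A : ℤ) := h2.dvd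
    have h4 : ((p^(2*j) : ℕ) : ℤ) ∣ (A : ℤ) - (B : ℤ) := dvd_sub_comm.mp h3
    push_cast at h4
    exact h4
  set N := n * p with hNdef
  have hNmpj : N = m * p^j := hNn.symm
  set S := (Finset.Ico 1 N).filter (fun i => ¬ p ∣ i) with hS
  have hmem : ∀ i ∈ S, 1 ≤ i ∧ i < N ∧ ¬ p ∣ i := by
    intro i hi
    simp only [hS, mem_filter, mem_Ico] at hi
    exact ⟨hi.1.1, hi.1.2, hi.2⟩
  have hpN : p ∣ N := dvd_mul_left p n
  have hsigma_mem : ∀ i ∈ S, N - i ∈ S := by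
    intro i hi
    obtain ⟨h1, h2, h3⟩ := hmem i hi
    simp only [hS, mem_filter, mem_Ico]
    refine ⟨⟨by omega, by omega⟩, fun hd => h3 ?_⟩
    have heq : N - (N - i) = i := by omega
    rw [← heq]
    exact Nat.dvd_sub hpN hd
  have hunit : ∀ i : ℕ, ¬ p ∣ i → IsUnit ((i : ZMod (p^(2*j)))) := by
    intro i hi
    rw [ZMod.isUnit_iff_coprime]
    exact ((hp.coprime_iff_not_dvd.mpr hi).symm).pow_right _
  have hUunit : IsUnit ((∏ i ∈ S, i : ℕ) : ZMod (p^(2*j))) := by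
    rw [ZMod.isUnit_iff_coprime]
    exact Nat.Coprime.prod_left
      (fun i hi => ((hp.coprime_iff_not_dvd.mpr (hmem i hi).2.2).symm).pow_right _)
  set c : ZMod (p^(2*j)) := ((k * N : ℕ) : ZMod (p^(2*j))) with hc
  set U : ZMod (p^(2*j)) := ((∏ i ∈ S, i : ℕ) : ZMod (p^(2*j))) with hU
  set Q : ZMod (p^(2*j)) := ∏ i ∈ S, (-(i : ZMod (p^(2*j)))) with hQdef
  have hNN : ((N : ℕ) : ZMod (p^(2*j))) * ((N : ℕ) : ZMod (p^(2*j))) = 0 := by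
    rw [← Nat.cast_mul]
    have h5 : N * N = (m * m) * p^(2*j) := by rw [hNmpj]; ring
    rw [h5, Nat.cast_mul, ZMod.natCast_self, mul_zero]
  have hc2 : c * c = 0 := by
    rw [hc, ← Nat.cast_mul]
    have h5 : (k*N) * (k*N) = (k*k) * (N*N) := by ring
    have h6 : ((N*N : ℕ) : ZMod (p^(2*j))) = 0 := by rw [Nat.cast_mul, hNN]
    rw [h5, Nat.cast_mul, h6, mul_zero]
  have hcN : c * ((N:ℕ) : ZMod (p^(2*j))) = 0 := by
    rw [hc, Nat.cast_mul, mul_assoc, hNN, mul_zero]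
  have hinv : ∀ T : Finset ℕ, T ⊆ S → (∀ i ∈ T, N - i ∈ T) → (∀ i ∈ T, N - i ≠ i) →
      ∑ i ∈ T, c * ∏ i' ∈ S.erase i, (-(i' : ZMod (p^(2*j)))) = 0 := by
    intro T hTS hTinv hTfix
    apply Finset.sum_involution (fun i _ => N - i)
    · intro a ha
      have haS := hTS ha
      have hbS := hTS (hTinv a ha)
      obtain ⟨ha1, ha2, ha3⟩ := hmem a haS
      set b := N - a with hb
      have hPa : (∏ i' ∈ S.erase a, (-(i' : ZMod (p^(2*j))))) * (-(a : ZMod (p^(2*j)))) = Q :=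
        Finset.prod_erase_mul S _ haS
      have hPb : (∏ i' ∈ S.erase b, (-(i' : ZMod (p^(2*j))))) * (-(b : ZMod (p^(2*j)))) = Q :=
        Finset.prod_erase_mul S _ hbS
      have hab : (a : ZMod (p^(2*j))) + (b : ZMod (p^(2*j))) = ((N : ℕ) : ZMod (p^(2*j))) := by
        rw [← Nat.cast_add]; congr 1; omega
      have hubit : IsUnit ((a: ZMod (p^(2*j))) * (b: ZMod (p^(2*j)))) :=
        (hunit a ha3).mul (hunit b (hmem b hbS).2.2)
      rw [← hubit.mul_left_eq_zero]
      set Pa := ∏ i' ∈ S.erase a, (-(i' : ZMod (p^(2*j))))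
      set Pb := ∏ i' ∈ S.erase b, (-(i' : ZMod (p^(2*j))))
      have h1 : Pa * (a: ZMod (p^(2*j))) = -Q := by rw [← hPa]; ring
      have h2 : Pb * (b: ZMod (p^(2*j))) = -Q := by rw [← hPb]; ring
      calc (c * Pa + c * Pb) * ((a: ZMod (p^(2*j))) * (b: ZMod (p^(2*j))))
          = c * (Pa * (a: ZMod (p^(2*j)))) * (b: ZMod (p^(2*j)))
            + c * (Pb * (b: ZMod (p^(2*j)))) * (a: ZMod (p^(2*j))) := by ring
        _ = -(((a: ZMod (p^(2*j))) + (b: ZMod (p^(2*j)))) * (c * Q)) := by rw [h1, h2]; ring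
        _ = -(((N:ℕ): ZMod (p^(2*j))) * (c * Q)) := by rw [hab]
        _ = 0 := by
            rw [show ((N:ℕ): ZMod (p^(2*j))) * (c * Q)
              = (c * ((N:ℕ): ZMod (p^(2*j)))) * Q by ring, hcN, zero_mul, neg_zero]
    · intro a ha _; exact hTfix a ha
    · intro a ha; exact hTinv a ha
    · intro a ha
      have := (hmem a (hTS ha)).2.1
      omega
  have hpid : (A : ZMod (p^(2*j))) * U
      = (B : ZMod (p^(2*j))) * ∏ i ∈ S, (c - (i : ZMod (p^(2*j)))) := by
    have h0 := prod_id k p n hppos hnpos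
    have hcast : ((A * ∏ i ∈ S, i : ℕ) : ZMod (p^(2*j)))
        = ((B * ∏ i ∈ S, (k*(n*p) - i) : ℕ) : ZMod (p^(2*j))) := by
      rw [hA, hB, h0]
    push_cast at hcast
    rw [hU]
    push_cast
    rw [hcast]
    congr 1
    apply Finset.prod_congr rfl
    intro i hi
    have h2 := (hmem i hi).2.1
    have hle : i ≤ k * (n*p) := le_trans (le_of_lt h2) (Nat.le_mul_of_pos_left _ hk1)
    rw [hc, Nat.cast_sub hle]
  have hexp := prod_expand c hc2 S (fun i => (i : ZMod (p^(2*j))))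
  have hQU : Q = (-1)^(S.card) * U := by
    rw [hQdef, hU, Nat.cast_prod]
    calc ∏ i ∈ S, (-(i : ZMod (p^(2*j))))
        = ∏ i ∈ S, ((-1) * (i : ZMod (p^(2*j)))) := by simp
      _ = (∏ _i ∈ S, (-1 : ZMod (p^(2*j)))) * ∏ i ∈ S, (i : ZMod (p^(2*j))) :=
          Finset.prod_mul_distrib
      _ = (-1)^(S.card) * ∏ i ∈ S, (i : ZMod (p^(2*j))) := by rw [Finset.prod_const]
  have hcard : S.card = n * (p - 1) := by
    have h1 : (Finset.Ico 1 N).card = N - 1 := by rw [Nat.card_Ico]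
    have h2 : ((Finset.Ico 1 N).filter (fun i => p ∣ i)).card = n - 1 := by
      rw [hNdef, filter_dvd_image p n hppos, Finset.card_image_of_injective _
        (fun a b hab => Nat.eq_of_mul_eq_mul_left hppos hab), Nat.card_Ico]
    have h3 := Finset.card_filter_add_card_filter_not (s := Finset.Ico 1 N)
      (p := fun i => p ∣ i)
    have h4 : N = n + n * (p-1) := by
      rw [hNdef]
      have h6 : p = 1 + (p - 1) := by omega
      conv_lhs => rw [h6]
      ring
    simp only [hS]
    omega
  by_cases hE : Even (n * (p - 1))
  · -- main case: W = Q = U, cancel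
    have hfix : ∀ i ∈ S, N - i ≠ i := by
      intro i hi hcontra
      obtain ⟨h1, h2, h3⟩ := hmem i hi
      have h2i : N = 2 * i := by omega
      by_cases hp2 : p = 2
      · subst hp2
        have hN2 : N = n * 2 := hNdef
        have hin : i = n := by omega
        have hnE : Even n := by simpa using hE
        exact h3 (hin ▸ hnE.two_dvd)
      · have hpdvd : p ∣ 2 * i := h2i ▸ hpN
        rcases hp.dvd_mul.mp hpdvd with h | h
        · exact hp2 ((Nat.prime_dvd_prime_iff_eq hp Nat.prime_two).mp h)
        · exact h3 h
    have hsum0 := hinv S (Finset.Subset.refl S) hsigma_mem hfix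
    rw [← Finset.mul_sum] at hsum0
    rw [hexp, hsum0, add_zero] at hpid
    have hE' : Even S.card := by rw [hcard]; exact hE
    rw [show (∏ i ∈ S, (-(i : ZMod (p^(2*j))))) = Q from rfl, hQU,
      hE'.neg_one_pow, one_mul] at hpid
    exact (hUunit.mul_left_inj).mp hpid
  · -- p = 2, n odd, j = 1
    have hnodd : ¬ Even n := fun h => hE (h.mul_right _)
    have hp2 : p = 2 := by
      by_contra hne
      have hodd : Odd p := hp.odd_of_ne_two hne
      have : Even (p - 1) := Nat.Odd.sub_odd hodd odd_one
      exact hE (this.mul_left _)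
    subst hp2
    have h2n : ¬ 2 ∣ n := fun h => hnodd (even_iff_two_dvd.mpr h)
    have hj1 : j = 1 := by
      by_contra hne
      have hj2 : 2 ≤ j := by omega
      have : 2 ∣ n := by
        rw [hn]
        exact Dvd.dvd.mul_left (dvd_pow_self 2 (by omega : j - 1 ≠ 0)) m
      exact h2n this
    have hN2 : N = 2 * n := by rw [hNdef]; ring
    have hnS : n ∈ S := by
      simp only [hS, mem_filter, mem_Ico]
      exact ⟨⟨hnpos, by omega⟩, h2n⟩
    -- sum over S = f n + sum over erase
    have hT0 : ∑ i ∈ S.erase n, c * ∏ i' ∈ S.erase i, (-(i' : ZMod (2^(2*j)))) = 0 := by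
      apply hinv (S.erase n) (Finset.erase_subset n S)
      · intro i hi
        obtain ⟨hin, hiS⟩ := Finset.mem_erase.mp hi
        obtain ⟨h1, h2, h3⟩ := hmem i hiS
        refine Finset.mem_erase.mpr ⟨by omega, hsigma_mem i hiS⟩
      · intro i hi
        obtain ⟨hin, hiS⟩ := Finset.mem_erase.mp hi
        obtain ⟨h1, h2, h3⟩ := hmem i hiS
        omega
    have hsum : ∑ i ∈ S, c * ∏ i' ∈ S.erase i, (-(i' : ZMod (2^(2*j))))
        = c * ∏ i' ∈ S.erase n, (-(i' : ZMod (2^(2*j)))) := by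
      rw [← Finset.add_sum_erase S _ hnS, hT0, add_zero]
    rw [← Finset.mul_sum] at hsum
    rw [hexp, hsum] at hpid
    set Pn := ∏ i' ∈ S.erase n, (-(i' : ZMod (2^(2*j)))) with hPndef
    have hPn : Pn * (-(n : ZMod (2^(2*j)))) = Q := Finset.prod_erase_mul S _ hnS
    have hQnegU : Q = -U := by
      rw [hQU, hcard]
      have hodd : Odd (n * (2-1)) := by
        simpa using Nat.not_even_iff_odd.mp hnodd
      rw [hodd.neg_one_pow]
      ring
    have hc2n : c = 2 * (n : ZMod (2^(2*j))) := by
      have hdvd : (2:ℕ)^(2*j) ∣ k * N - 2 * n := by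
        obtain ⟨t, ht⟩ := hk
        rw [hj1]
        have : k * N - 2 * n = 4 * (n * t) := by
          rw [hN2, ht]; ring_nf; omega
        rw [this]
        norm_num
      have hle : 2 * n ≤ k * N := by
        rw [hN2]
        calc 2 * n = 1 * (2 * n) := by ring
          _ ≤ k * (2 * n) := Nat.mul_le_mul_right _ hk1
      have h0 : ((k * N - 2 * n : ℕ) : ZMod (2^(2*j))) = 0 :=
        (ZMod.natCast_eq_zero_iff _ _).mpr hdvd
      rw [Nat.cast_sub hle] at h0
      rw [hc]
      push_cast at h0 ⊢
      linear_combination h0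
    -- final computation
    have hUnunit : IsUnit (U * (n : ZMod (2^(2*j)))) := hUunit.mul (hunit n h2n)
    apply (hUnunit.mul_left_inj).mp
    calc (A : ZMod (2^(2*j))) * (U * (n : ZMod (2^(2*j))))
        = ((A : ZMod (2^(2*j))) * U) * (n : ZMod (2^(2*j))) := by ring
      _ = ((B : ZMod (2^(2*j))) * (Q + c * Pn)) * (n : ZMod (2^(2*j))) := by rw [hpid]
      _ = (B : ZMod (2^(2*j))) * (Q * (n : ZMod (2^(2*j))) + c * (Pn * (n : ZMod (2^(2*j))))) := by
          ring
      _ = (B : ZMod (2^(2*j))) * (Q * (n : ZMod (2^(2*j))) + c * (-Q)) := by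
          rw [show Pn * (n : ZMod (2^(2*j))) = -(Pn * (-(n : ZMod (2^(2*j))))) by ring, hPn]
      _ = (B : ZMod (2^(2*j))) * ((-U) * (n : ZMod (2^(2*j))) + c * U) := by rw [hQnegU]; ring_nf
      _ = (B : ZMod (2^(2*j))) * (U * ((2 * (n : ZMod (2^(2*j)))) - (n : ZMod (2^(2*j))))) := by
          rw [← hc2n]; ring
      _ = (B : ZMod (2^(2*j))) * (U * (n : ZMod (2^(2*j)))) := by ring_nf

lemma sum_divisors_coprime {M : Type*} [AddCommMonoid M] {a b : ℕ} (hab : a.Coprime b)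
    (ha : a ≠ 0) (hb : b ≠ 0) (F : ℕ → M) :
    ∑ d ∈ (a*b).divisors, F d = ∑ x ∈ a.divisors, ∑ y ∈ b.divisors, F (x*y) := by
  rw [← Finset.sum_product']
  apply Finset.sum_nbij' (i := fun d => (Nat.gcd d a, Nat.gcd d b))
    (j := fun x => x.1 * x.2)
  · intro d hd
    obtain ⟨hdvd, hne⟩ := Nat.mem_divisors.mp hd
    exact Finset.mem_product.mpr ⟨Nat.mem_divisors.mpr ⟨Nat.gcd_dvd_right d a, ha⟩,
      Nat.mem_divisors.mpr ⟨Nat.gcd_dvd_right d b, hb⟩⟩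
  · rintro ⟨x, y⟩ hxy
    obtain ⟨hx, hy⟩ := Finset.mem_product.mp hxy
    exact Nat.mem_divisors.mpr ⟨mul_dvd_mul (Nat.mem_divisors.mp hx).1 (Nat.mem_divisors.mp hy).1,
      mul_ne_zero ha hb⟩
  · intro d hd
    exact (Nat.gcd_mul_gcd_eq_iff_dvd_mul_of_coprime hab).mpr (Nat.mem_divisors.mp hd).1
  · rintro ⟨x, y⟩ hxy
    obtain ⟨hx, hy⟩ := Finset.mem_product.mp hxy
    have hxa := (Nat.mem_divisors.mp hx).1
    have hyb := (Nat.mem_divisors.mp hy).1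
    have hya : Nat.Coprime y a := Nat.Coprime.coprime_dvd_left hyb hab.symm
    have hxb : Nat.Coprime x b := Nat.Coprime.coprime_dvd_left hxa hab
    have h1 : Nat.gcd (x*y) a = x := by
      rw [Nat.Coprime.gcd_mul_right_cancel x hya]
      exact Nat.gcd_eq_left hxa
    have h2 : Nat.gcd (x*y) b = y := by
      rw [mul_comm, Nat.Coprime.gcd_mul_right_cancel y hxb]
      exact Nat.gcd_eq_left hyb
    simp [h1, h2]
  · intro d hd
    congr 1
    exact ((Nat.gcd_mul_gcd_eq_iff_dvd_mul_of_coprime hab).mpr (Nat.mem_divisors.mp hd).1).symm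

lemma gauss_red (k : ℕ) (hk : Odd k) (hk1 : 0 < k) (r : ℕ) (hr : 1 ≤ r) :
    ((r:ℤ)^2) ∣ ∑ d ∈ r.divisors, ((moebius (r/d) : ℤ) * ((k*d - 1).choose (d-1) : ℤ)) := by
  have hr0 : r ≠ 0 := by omega
  set F : ℤ := ∑ d ∈ r.divisors, ((moebius (r/d) : ℤ) * ((k*d - 1).choose (d-1) : ℤ)) with hF
  -- step 1 : each prime power divides F
  have hstep : ∀ p ∈ r.primeFactors, ((p:ℤ)^(2 * r.factorization p)) ∣ F := by
    intro p hpmem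
    have hp : p.Prime := Nat.prime_of_mem_primeFactors hpmem
    set α := r.factorization p with hα
    have hα1 : 1 ≤ α := (Nat.Prime.factorization_pos_of_dvd hp hr0
      (Nat.dvd_of_mem_primeFactors hpmem))
    set s := r / p^α with hs
    have hrs : p^α * s = r := Nat.ordProj_mul_ordCompl_eq_self r p
    have hps : ¬ p ∣ s := Nat.not_dvd_ordCompl hp hr0
    have hs0 : s ≠ 0 := by
      intro h; rw [h, mul_zero] at hrs; exact hr0 hrs.symm
    have hcop : Nat.Coprime (p^α) s := Nat.Coprime.pow_left _ (hp.coprime_iff_not_dvd.mpr hps)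
    have hres : F = ∑ y ∈ s.divisors, ∑ β ∈ Finset.range (α+1),
        ((moebius (p^(α-β) * (s/y)) : ℤ) * ((k*(p^β * y) - 1).choose ((p^β * y)-1) : ℤ)) := by
      rw [hF, ← hrs, sum_divisors_coprime hcop (pow_ne_zero _ hp.pos.ne') hs0]
      rw [Finset.sum_comm]
      apply Finset.sum_congr rfl
      intro y hy
      rw [Nat.sum_divisors_prime_pow hp]
      apply Finset.sum_congr rfl
      intro β hβ
      have hβα : β ≤ α := by simpa using Nat.lt_succ_iff.mp (Finset.mem_range.mp hβ)
      have hyd := (Nat.mem_divisors.mp hy).1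
      congr 2
      rw [Nat.mul_div_mul_comm (pow_dvd_pow p hβα) hyd, Nat.pow_div hβα hp.pos]
    -- now divisibility of each y-term
    rw [hres]
    apply Finset.dvd_sum
    intro y hy
    have hyd := (Nat.mem_divisors.mp hy).1
    have hy0 : 0 < y := Nat.pos_of_mem_divisors hy
    have hpy : ¬ p ∣ y := fun h => hps (h.trans hyd)
    -- inner sum over β equals μ(s/y) * (a_{p^α y} - a_{p^{α-1} y})
    have hsplit : ∑ β ∈ Finset.range (α+1),
        ((moebius (p^(α-β) * (s/y)) : ℤ) * ((k*(p^β * y) - 1).choose ((p^β * y)-1) : ℤ))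
      = (moebius (s/y) : ℤ) *
          (((k*(p^α * y) - 1).choose ((p^α * y)-1) : ℤ)
            - ((k*(p^(α-1) * y) - 1).choose ((p^(α-1) * y)-1) : ℤ)) := by
      have hco : ∀ t : ℕ, Nat.Coprime (p^t) (s/y) :=
        fun t => Nat.Coprime.pow_left _ (hp.coprime_iff_not_dvd.mpr
          (fun h => hps (h.trans (Nat.div_dvd_of_dvd hyd))))
      have hmu : ∀ t : ℕ, moebius (p^t * (s/y)) = moebius (p^t) * moebius (s/y) :=
        fun t => isMultiplicative_moebius.map_mul_of_coprime (hco t)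
      rw [show α + 1 = (α - 1) + 1 + 1 by omega, Finset.sum_range_succ, Finset.sum_range_succ]
      have hzero : ∀ β ∈ Finset.range (α - 1),
          ((moebius (p^(α-β) * (s/y)) : ℤ) * ((k*(p^β * y) - 1).choose ((p^β * y)-1) : ℤ)) = 0 := by
        intro β hβ
        have hβlt : β < α - 1 := Finset.mem_range.mp hβ
        have : moebius (p^(α-β)) = 0 := by
          rw [moebius_apply_prime_pow hp (by omega)]
          simp only [if_neg (by omega : ¬ α - β = 1)]
        rw [hmu, this]
        push_cast
        ring
      rw [Finset.sum_eq_zero hzero, zero_add]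
      have e1 : α - (α - 1 + 1) = 0 := by omega
      have e2 : α - (α - 1) = 1 := by omega
      have e3 : α - 1 + 1 = α := by omega
      rw [e1, hmu, hmu, e2, pow_zero, moebius_apply_one, pow_one, moebius_apply_prime hp, e3]
      push_cast
      ring
    rw [hsplit]
    apply Dvd.dvd.mul_left
    have := key k p α y hp hk hk1 hα1 hy0 hpy
    have hc1 : p^α * y = y * p^α := mul_comm _ _
    have hc2 : p^(α-1) * y = y * p^(α-1) := mul_comm _ _
    rw [hc1, hc2]
    exact this
  -- step 2: assemble
  have hprod : (r:ℤ)^2 = ∏ p ∈ r.primeFactors, ((p:ℤ)^(2 * r.factorization p)) := by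
    have h1 : (r:ℤ) = ∏ p ∈ r.primeFactors, ((p:ℤ)^(r.factorization p)) := by
      conv_lhs => rw [← Nat.factorization_prod_pow_eq_self hr0]
      rw [Finsupp.prod, Nat.support_factorization]
      push_cast
      rfl
    rw [h1, ← Finset.prod_pow]
    apply Finset.prod_congr rfl
    intro p _
    rw [← pow_mul, mul_comm]
  rw [hprod]
  apply Finset.prod_dvd_of_coprime
  · intro p hp q hq hpq
    have hpp := Nat.prime_of_mem_primeFactors hp
    have hqp := Nat.prime_of_mem_primeFactors hq
    simp only [Function.onFun]
    apply IsCoprime.pow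
    rw [Nat.isCoprime_iff_coprime]
    exact (Nat.coprime_primes hpp hqp).mpr hpq
  · exact fun p hp => hstep p hp


theorem stmt17 (p : ℤ) (hp : p ≤ -1) (r : ℕ) (hr : 1 ≤ r) :
    (((r : ℤ) ^ 2) ∣
        ∑ d ∈ r.divisors, (ArithmeticFunction.moebius (r / d) : ℤ) *
          ((3 * d - 1).choose (d - 1) : ℤ)) ∧
      (((r : ℤ) ^ 2) ∣
        ∑ d ∈ r.divisors, (ArithmeticFunction.moebius (r / d) : ℤ) *
          (((2 * p.natAbs + 1) * d - 1).choose (d - 1) : ℤ)) := by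
  constructor
  · exact gauss_red 3 (by decide) (by norm_num) r hr
  · exact gauss_red (2 * p.natAbs + 1) ⟨p.natAbs, by ring⟩ (by positivity) r hr
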